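/- arXiv:2409.01730 — 2 statements merged into one kernel-verified Lean document; each statement's English description precedes it below -/
import Mathlib

section
/- Let (Ω, F, P) be a probability space, d ≥ 1 a natural number, θ* ∈ ℝ^d, and let g, Δ : ℝ^d → ℝ^d be functions satisfying the nondegeneracy condition g(θ*) + Δ(θ*) = 0. Fix α ∈ (0,1) and δ ∈ (0,α). Suppose that for every θ ∈ ℝ^d there are set-valued random elements T_{α−δ}(θ) : Ω → Set(ℝ^d) and R_δ(θ) : Ω → Set(ℝ^d) such that the events {ω : g(θ) ∈ T_{α−δ}(θ)(ω)}, {ω : Δ(θ) ∈ R_δ(θ)(ω)}, and {ω : 0 ∈ R_δ(θ)(ω) + T_{α−δ}(θ)(ω)} are measurable, and such that P(g(θ) ∈ T_{α−δ}(θ)) ≥ 1 − (α − δ) and P(Δ(θ) ∈ R_δ(θ)) ≥ 1 − δ. Define the random confidence set C^PP_α(ω) = {θ ∈ ℝ^d : 0 ∈ R_δ(θ)(ω) + T_{α−δ}(θ)(ω)}, where + denotes the Minkowski sum of subsets of ℝ^d. Then P(θ* ∈ C^PP_α) ≥ 1 − α. -/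
open MeasureTheory ProbabilityTheory
open scoped Pointwise

/-- **Theorem 1 (Convex estimation).** If, for every `θ`, the random set
`T (α - δ)` covers `g θ` with probability at least `1 - (α - δ)` and the random set
`R δ` covers the rectifier `Δ θ` with probability at least `1 - δ`, and the
nondegeneracy condition `g θ* + Δ θ* = 0` holds, then the prediction-powered
confidence set `C^PP_α ω = {θ | 0 ∈ R θ ω + T θ ω}` (Minkowski sum) covers `θ*`
with probability at least `1 - α`. -/
theorem fedppi_convex_estimation
    {Ω : Type*} [MeasurableSpace Ω] (P : Measure Ω) [IsProbabilityMeasure P]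
    (d : ℕ) (hd : 1 ≤ d)
    (θstar : Fin d → ℝ) (g Δ : (Fin d → ℝ) → (Fin d → ℝ))
    (h_nondeg : g θstar + Δ θstar = 0)
    (α δ : ℝ) (hα : α ∈ Set.Ioo (0 : ℝ) 1) (hδ : δ ∈ Set.Ioo (0 : ℝ) α)
    (T R : (Fin d → ℝ) → Ω → Set (Fin d → ℝ))
    (hT_meas : ∀ θ, MeasurableSet {ω | g θ ∈ T θ ω})
    (hR_meas : ∀ θ, MeasurableSet {ω | Δ θ ∈ R θ ω})
    (hC_meas : ∀ θ, MeasurableSet {ω | (0 : Fin d → ℝ) ∈ R θ ω + T θ ω})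
    (hT_cov : ∀ θ, ENNReal.ofReal (1 - (α - δ)) ≤ P {ω | g θ ∈ T θ ω})
    (hR_cov : ∀ θ, ENNReal.ofReal (1 - δ) ≤ P {ω | Δ θ ∈ R θ ω}) :
    ENNReal.ofReal (1 - α)
      ≤ P {ω | θstar ∈ {θ : Fin d → ℝ | (0 : Fin d → ℝ) ∈ R θ ω + T θ ω}} := by
  obtain ⟨hα0, hα1⟩ := hα
  obtain ⟨hδ0, hδα⟩ := hδ
  set A : Set Ω := {ω | g θstar ∈ T θstar ω}
  set B : Set Ω := {ω | Δ θstar ∈ R θstar ω}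
  -- the intersection A ∩ B is contained in the coverage event
  have hsub : A ∩ B ⊆ {ω | θstar ∈ {θ : Fin d → ℝ | (0 : Fin d → ℝ) ∈ R θ ω + T θ ω}} := by
    rintro ω ⟨hA, hB⟩
    have : Δ θstar + g θstar = 0 := by
      rw [add_comm]; exact h_nondeg
    refine Set.mem_setOf.2 (Set.mem_setOf.2 ?_)
    rw [← this]
    exact Set.add_mem_add hB hA
  -- complement bounds
  have hAc : P Aᶜ ≤ ENNReal.ofReal (α - δ) := by
    have := hT_cov θstar
    have h1 : P Aᶜ = 1 - P A := prob_compl_eq_one_sub (hT_meas θstar)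
    rw [h1]
    calc (1 : ENNReal) - P A ≤ 1 - ENNReal.ofReal (1 - (α - δ)) :=
          tsub_le_tsub_left this 1
      _ = ENNReal.ofReal (α - δ) := by
          rw [← ENNReal.ofReal_one, ← ENNReal.ofReal_sub _ (by linarith)]
          ring_nf
  have hBc : P Bᶜ ≤ ENNReal.ofReal δ := by
    have := hR_cov θstar
    have h1 : P Bᶜ = 1 - P B := prob_compl_eq_one_sub (hR_meas θstar)
    rw [h1]
    calc (1 : ENNReal) - P B ≤ 1 - ENNReal.ofReal (1 - δ) :=
          tsub_le_tsub_left this 1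
      _ = ENNReal.ofReal δ := by
          rw [← ENNReal.ofReal_one, ← ENNReal.ofReal_sub _ (by linarith)]
          ring_nf
  have hUnion : P (Aᶜ ∪ Bᶜ) ≤ ENNReal.ofReal α := by
    calc P (Aᶜ ∪ Bᶜ) ≤ P Aᶜ + P Bᶜ := measure_union_le _ _
      _ ≤ ENNReal.ofReal (α - δ) + ENNReal.ofReal δ := add_le_add hAc hBc
      _ = ENNReal.ofReal α := by
          rw [← ENNReal.ofReal_add (by linarith) (by linarith)]; ring_nf
  have hAB : ENNReal.ofReal (1 - α) ≤ P (A ∩ B) := by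
    have hmeas : MeasurableSet (Aᶜ ∪ Bᶜ) :=
      ((hT_meas θstar).compl.union (hR_meas θstar).compl)
    rw [← Set.compl_inter] at hUnion
    have h1 : P (A ∩ B) = 1 - P (A ∩ B)ᶜ := by
      rw [prob_compl_eq_one_sub ((hT_meas θstar).inter (hR_meas θstar)),
        ENNReal.sub_sub_cancel ENNReal.one_ne_top prob_le_one]
    rw [h1]
    calc ENNReal.ofReal (1 - α) = 1 - ENNReal.ofReal α := by
          rw [← ENNReal.ofReal_one, ← ENNReal.ofReal_sub _ (by linarith)]
      _ ≤ 1 - P (A ∩ B)ᶜ := tsub_le_tsub_left hUnion 1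
  exact hAB.trans (measure_mono hsub)
end

section
/- Let (Ω, F, P) be a probability space, Θ an arbitrary set of admissible parameters, and θ* ∈ Θ. Fix α ∈ (0,1) and δ ∈ (0,α). Let L, L^f : Θ → ℝ be deterministic functions with Δ(θ) := L(θ) − L^f(θ), assume L(θ*) ≤ L(θ) for all θ ∈ Θ, and let L̃^f : Θ → Ω → ℝ be a random function and θ̃^f : Ω → Θ a random element. Suppose there are random bounds R^u_{δ/2}, R^l_{δ/2}, T^u_{(α−δ)/2}, T^l_{(α−δ)/2} : Θ → Ω → ℝ (all relevant events measurable) such that: P( Δ(θ*) ≥ R^l_{δ/2}(θ*) ) ≥ 1 − δ/2; P( Δ(θ̃^f) ≤ R^u_{δ/2}(θ̃^f) ) ≥ 1 − δ/2; P( L̃^f(θ*) − L^f(θ*) ≤ T^u_{(α−δ)/2}(θ*) ) ≥ 1 − (α−δ)/2; and P( L̃^f(θ̃^f) − L^f(θ̃^f) ≥ T^l_{(α−δ)/2}(θ̃^f) ) ≥ 1 − (α−δ)/2. Define the random confidence set C^PP_α(ω) = { θ ∈ Θ : L̃^f(θ)(ω) ≤ L̃^f(θ̃^f(ω))(ω)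 + ( R^u_{δ/2}(θ̃^f(ω))(ω) − R^l_{δ/2}(θ)(ω) ) + ( T^u_{(α−δ)/2}(θ)(ω) − T^l_{(α−δ)/2}(θ̃^f(ω))(ω) ) }. Then P(θ* ∈ C^PP_α) ≥ 1 − α. -/
open MeasureTheory ProbabilityTheory

private lemma compl_prob_le {Ω : Type*} [MeasurableSpace Ω] (P : Measure Ω)
    [IsProbabilityMeasure P] {E : Set Ω} (hE : MeasurableSet E) {x : ℝ}
    (hx : 0 ≤ x) (h : ENNReal.ofReal (1 - x) ≤ P E) :
    P Eᶜ ≤ ENNReal.ofReal x := by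
  rw [prob_compl_eq_one_sub hE]
  refine le_trans (tsub_le_tsub_left h 1) ?_
  rcases le_or_gt x 1 with hx1 | hx1
  · refine tsub_le_iff_right.mpr ?_
    rw [← ENNReal.ofReal_add hx (by linarith)]
    simp [show x + (1 - x) = 1 by ring]
  · refine le_trans tsub_le_self ?_
    simpa using ENNReal.one_le_ofReal.mpr hx1.le

/-- **Theorem 3 (General risk minimization: finite population).**
`L` is the true risk with minimizer `θ* ∈ Θ`, `Lf` the risk computed with
predictions, `Δ θ = L θ - Lf θ` the rectifier, `Ltf` a random empirical
predicted risk and `θtf` a random empirical minimizer. Given lower/upper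
confidence bounds for the rectifier at `θ*` and `θtf` (each at level
`1 - δ/2`) and for the empirical fluctuation `Ltf - Lf` at `θ*` and `θtf`
(each at level `1 - (α-δ)/2`), the prediction-powered confidence set
`C^PP_α = {θ | Ltf θ ≤ Ltf θtf + (Ru θtf - Rl θ) + (Tu θ - Tl θtf)}`
covers `θ*` with probability at least `1 - α`. -/
theorem fedppi_general_risk_minimization
    {Ω : Type*} [MeasurableSpace Ω] (P : Measure Ω) [IsProbabilityMeasure P]
    {Θ : Type*} (θstar : Θ)
    (α δ : ℝ) (hα : α ∈ Set.Ioo (0 : ℝ) 1) (hδ : δ ∈ Set.Ioo (0 : ℝ) α)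
    (L Lf : Θ → ℝ) (h_min : ∀ θ : Θ, L θstar ≤ L θ)
    (Ltf : Θ → Ω → ℝ) (θtf : Ω → Θ)
    (Ru Rl Tu Tl : Θ → Ω → ℝ)
    (hRl_meas : MeasurableSet {ω | Rl θstar ω ≤ L θstar - Lf θstar})
    (hRu_meas : MeasurableSet {ω | L (θtf ω) - Lf (θtf ω) ≤ Ru (θtf ω) ω})
    (hTu_meas : MeasurableSet {ω | Ltf θstar ω - Lf θstar ≤ Tu θstar ω})
    (hTl_meas : MeasurableSet {ω | Tl (θtf ω) ω ≤ Ltf (θtf ω) ω - Lf (θtf ω)})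
    (hC_meas : MeasurableSet {ω | Ltf θstar ω ≤ Ltf (θtf ω) ω
        + (Ru (θtf ω) ω - Rl θstar ω) + (Tu θstar ω - Tl (θtf ω) ω)})
    (hRl_cov : ENNReal.ofReal (1 - δ / 2)
        ≤ P {ω | Rl θstar ω ≤ L θstar - Lf θstar})
    (hRu_cov : ENNReal.ofReal (1 - δ / 2)
        ≤ P {ω | L (θtf ω) - Lf (θtf ω) ≤ Ru (θtf ω) ω})
    (hTu_cov : ENNReal.ofReal (1 - (α - δ) / 2)
        ≤ P {ω | Ltf θstar ω - Lf θstar ≤ Tu θstar ω})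
    (hTl_cov : ENNReal.ofReal (1 - (α - δ) / 2)
        ≤ P {ω | Tl (θtf ω) ω ≤ Ltf (θtf ω) ω - Lf (θtf ω)}) :
    ENNReal.ofReal (1 - α)
      ≤ P {ω | θstar ∈ {θ : Θ | Ltf θ ω ≤ Ltf (θtf ω) ω
            + (Ru (θtf ω) ω - Rl θ ω) + (Tu θ ω - Tl (θtf ω) ω)}} := by
  obtain ⟨hα0, hα1⟩ := hα
  obtain ⟨hδ0, hδα⟩ := hδ
  set A := {ω | Rl θstar ω ≤ L θstar - Lf θstar}
  set B := {ω | L (θtf ω) - Lf (θtf ω) ≤ Ru (θtf ω) ω}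
  set C := {ω | Ltf θstar ω - Lf θstar ≤ Tu θstar ω}
  set D := {ω | Tl (θtf ω) ω ≤ Ltf (θtf ω) ω - Lf (θtf ω)}
  have hsub : A ∩ B ∩ C ∩ D ⊆ {ω | θstar ∈ {θ : Θ | Ltf θ ω ≤ Ltf (θtf ω) ω
      + (Ru (θtf ω) ω - Rl θ ω) + (Tu θ ω - Tl (θtf ω) ω)}} := by
    rintro ω ⟨⟨⟨hA, hB⟩, hC⟩, hD⟩
    have hmin := h_min (θtf ω)
    simp only [A, B, C, D, Set.mem_setOf_eq] at hA hB hC hD ⊢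
    linarith
  have hABCD : MeasurableSet (A ∩ B ∩ C ∩ D) :=
    ((hRl_meas.inter hRu_meas).inter hTu_meas).inter hTl_meas
  have hcompl : P (A ∩ B ∩ C ∩ D)ᶜ ≤ ENNReal.ofReal α := by
    have : (A ∩ B ∩ C ∩ D)ᶜ = Aᶜ ∪ Bᶜ ∪ Cᶜ ∪ Dᶜ := by
      simp [Set.compl_inter]
    rw [this]
    have hA' := compl_prob_le P hRl_meas (by linarith : (0:ℝ) ≤ δ / 2) hRl_cov
    have hB' := compl_prob_le P hRu_meas (by linarith : (0:ℝ) ≤ δ / 2) hRu_cov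
    have hC' := compl_prob_le P hTu_meas
      (by linarith : (0:ℝ) ≤ (α - δ) / 2) hTu_cov
    have hD' := compl_prob_le P hTl_meas
      (by linarith : (0:ℝ) ≤ (α - δ) / 2) hTl_cov
    calc P (Aᶜ ∪ Bᶜ ∪ Cᶜ ∪ Dᶜ) ≤ P Aᶜ + P Bᶜ + P Cᶜ + P Dᶜ := by
          refine le_trans (measure_union_le _ _) ?_
          refine add_le_add ?_ le_rfl
          refine le_trans (measure_union_le _ _) ?_
          exact add_le_add (measure_union_le _ _) le_rfl
      _ ≤ ENNReal.ofReal (δ / 2) + ENNReal.ofReal (δ / 2)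
          + ENNReal.ofReal ((α - δ) / 2) + ENNReal.ofReal ((α - δ) / 2) := by
          gcongr
      _ = ENNReal.ofReal α := by
          rw [← ENNReal.ofReal_add (by linarith) (by linarith),
            ← ENNReal.ofReal_add (by linarith) (by linarith),
            ← ENNReal.ofReal_add (by linarith) (by linarith)]
          ring_nf
  calc ENNReal.ofReal (1 - α) = 1 - ENNReal.ofReal α := by
        rw [← ENNReal.ofReal_one, ← ENNReal.ofReal_sub _ hα0.le]
    _ ≤ 1 - P (A ∩ B ∩ C ∩ D)ᶜ := tsub_le_tsub_left hcompl 1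
    _ = P (A ∩ B ∩ C ∩ D) := by
        rw [prob_compl_eq_one_sub hABCD, ENNReal.sub_sub_cancel ENNReal.one_ne_top
          prob_le_one]
    _ ≤ _ := measure_mono hsub
end
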